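/- Each of the Laurent series s₁(t) = 1/t, s₂(t) = (4t² − 8t + 1)/t³, s₃(t) = (12t² − 1)/t³, and s₄(t) = h(t)/t³ (where h ∈ ℚ[[t]] is the unique series with h(0)=1, h² = (1−6t)³(1+2t)) is annihilated by the linear differential operator L = t³(2t+1)(6t−1)∂t⁴ + 4t²(48t² + 13t − 3)∂t³ + 36t(3t+1)(8t−1)∂t² + (1152t² + 168t − 24)∂t + (288t + 24), acting on formal Laurent series in t. -/

import Mathlib

open PowerSeries

lemma D_ofNat {A M : Type*} [CommSemiring A] [Algebra ℚ A] [AddCommMonoid M] [Module A M]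
    [Module ℚ M] (D : Derivation ℚ A M) (n : ℕ) [n.AtLeastTwo] :
    D (OfNat.ofNat n : A) = 0 := by
  rw [← map_ofNat (algebraMap ℚ A) n]; exact D.map_algebraMap _

set_option maxHeartbeats 2000000 in
/-- The operator `L = t³(2t+1)(6t−1)∂⁴ + 4t²(48t²+13t−3)∂³ + 36t(3t+1)(8t−1)∂²
+ (1152t²+168t−24)∂ + (288t+24)` annihilates each of the Laurent series `s₁ = 1/t`,
`s₂ = (4t²−8t+1)/t³`, `s₃ = (12t²−1)/t³`, `s₄ = h/t³` where `h(0)=1`, `h² = (1−6t)³(1+2t)`.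
Here `∂` is any derivation on `ℚ((t))` with `∂t = 1` (formal differentiation `d/dt`). -/
theorem operator_annihilates_solutions (h : PowerSeries ℚ)
    (hh0 : (constantCoeff : PowerSeries ℚ →+* ℚ) h = 1)
    (hh : h ^ 2 = (1 - 6 * X) ^ 3 * (1 + 2 * X))
    (D : Derivation ℚ (LaurentSeries ℚ) (LaurentSeries ℚ))
    (hD : D ((X : PowerSeries ℚ) : LaurentSeries ℚ) = 1) :
    let T : LaurentSeries ℚ := ((X : PowerSeries ℚ) : LaurentSeries ℚ)
    let d : LaurentSeries ℚ → LaurentSeries ℚ := fun f => D f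
    let L : LaurentSeries ℚ → LaurentSeries ℚ := fun f =>
      T ^ 3 * (2 * T + 1) * (6 * T - 1) * d^[4] f
        + 4 * T ^ 2 * (48 * T ^ 2 + 13 * T - 3) * d^[3] f
        + 36 * T * (3 * T + 1) * (8 * T - 1) * d^[2] f
        + (1152 * T ^ 2 + 168 * T - 24) * d f
        + (288 * T + 24) * f
    L (1 / T) = 0 ∧
    L ((4 * T ^ 2 - 8 * T + 1) / T ^ 3) = 0 ∧
    L ((12 * T ^ 2 - 1) / T ^ 3) = 0 ∧
    L ((h : LaurentSeries ℚ) / T ^ 3) = 0 := by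
  intro T d L
  have hT0 : T ≠ 0 := by
    intro hc
    apply X_ne_zero (R := ℚ)
    apply HahnSeries.ofPowerSeries_injective (Γ := ℤ)
    rw [map_zero]; exact hc
  have hDT : D T = 1 := hD
  have hH2 : ((h : LaurentSeries ℚ))^2 = (1 - 6*T)^3 * (1 + 2*T) := by
    have h2 := congrArg (HahnSeries.ofPowerSeries ℤ ℚ) hh
    simpa only [map_pow, map_mul, map_add, map_sub, map_one, map_ofNat] using h2
  have hHne : ((h : LaurentSeries ℚ)) ≠ 0 := by
    intro hc
    have : h = 0 := HahnSeries.ofPowerSeries_injective (Γ := ℤ) (by rw [map_zero]; exact hc)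
    rw [this] at hh0; simp at hh0
  have huv : (1 - 6*T)^3 * (1 + 2*T) ≠ 0 := hH2 ▸ pow_ne_zero 2 hHne
  have hu : (1 - 6*T) ≠ 0 := by
    intro hc; apply huv; rw [hc]; ring
  have hv : (1 + 2*T) ≠ 0 := by
    intro hc; apply huv; rw [hc]; ring
  have h2ne : (2 : LaurentSeries ℚ) ≠ 0 := by
    intro hc
    have h2 := (algebraMap ℚ (LaurentSeries ℚ)).injective
      (a₁ := 2) (a₂ := 0) (by rw [map_ofNat, map_zero]; exact hc)
    norm_num at h2
  have hWne : (T^7 * (1-6*T)^4 * (1+2*T)^4) ≠ 0 :=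
    mul_ne_zero (mul_ne_zero (pow_ne_zero _ hT0) (pow_ne_zero _ hu)) (pow_ne_zero _ hv)
  have e11 : d (1/T) = (-1)/T^2 := by
    show D (1/T) = _
    rw [Derivation.leibniz_div]
    simp only [map_add, map_sub, map_neg, Derivation.leibniz, Derivation.leibniz_pow, Derivation.map_one_eq_zero, hDT, smul_eq_mul, nsmul_eq_mul, Nat.cast_ofNat, mul_zero, zero_mul, add_zero, zero_add, mul_one, one_mul, sub_zero, zero_sub, neg_zero, neg_neg, pow_one, D_ofNat D 2, D_ofNat D 3, D_ofNat D 4, D_ofNat D 5, D_ofNat D 6, D_ofNat D 7, D_ofNat D 8]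
    field_simp [hT0, hu, hv, hHne]
    try ring

  have e12 : d ((-1)/T^2) = 2/T^3 := by
    show D ((-1)/T^2) = _
    rw [Derivation.leibniz_div]
    simp only [map_add, map_sub, map_neg, Derivation.leibniz, Derivation.leibniz_pow, Derivation.map_one_eq_zero, hDT, smul_eq_mul, nsmul_eq_mul, Nat.cast_ofNat, mul_zero, zero_mul, add_zero, zero_add, mul_one, one_mul, sub_zero, zero_sub, neg_zero, neg_neg, pow_one, D_ofNat D 2, D_ofNat D 3, D_ofNat D 4, D_ofNat D 5, D_ofNat D 6, D_ofNat D 7, D_ofNat D 8]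
    field_simp [hT0, hu, hv, hHne]
    try ring

  have e13 : d (2/T^3) = (-6)/T^4 := by
    show D (2/T^3) = _
    rw [Derivation.leibniz_div]
    simp only [map_add, map_sub, map_neg, Derivation.leibniz, Derivation.leibniz_pow, Derivation.map_one_eq_zero, hDT, smul_eq_mul, nsmul_eq_mul, Nat.cast_ofNat, mul_zero, zero_mul, add_zero, zero_add, mul_one, one_mul, sub_zero, zero_sub, neg_zero, neg_neg, pow_one, D_ofNat D 2, D_ofNat D 3, D_ofNat D 4, D_ofNat D 5, D_ofNat D 6, D_ofNat D 7, D_ofNat D 8]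
    field_simp [hT0, hu, hv, hHne]
    try ring

  have e14 : d ((-6)/T^4) = 24/T^5 := by
    show D ((-6)/T^4) = _
    rw [Derivation.leibniz_div]
    simp only [map_add, map_sub, map_neg, Derivation.leibniz, Derivation.leibniz_pow, Derivation.map_one_eq_zero, hDT, smul_eq_mul, nsmul_eq_mul, Nat.cast_ofNat, mul_zero, zero_mul, add_zero, zero_add, mul_one, one_mul, sub_zero, zero_sub, neg_zero, neg_neg, pow_one, D_ofNat D 2, D_ofNat D 3, D_ofNat D 4, D_ofNat D 5, D_ofNat D 6, D_ofNat D 7, D_ofNat D 8]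
    field_simp [hT0, hu, hv, hHne]
    try ring

  have e21 : d ((4 * T ^ 2 - 8 * T + 1) / T ^ 3) = ((-4)*T^2 + 16*T - 3)/T^4 := by
    show D ((4 * T ^ 2 - 8 * T + 1) / T ^ 3) = _
    rw [Derivation.leibniz_div]
    simp only [map_add, map_sub, map_neg, Derivation.leibniz, Derivation.leibniz_pow, Derivation.map_one_eq_zero, hDT, smul_eq_mul, nsmul_eq_mul, Nat.cast_ofNat, mul_zero, zero_mul, add_zero, zero_add, mul_one, one_mul, sub_zero, zero_sub, neg_zero, neg_neg, pow_one, D_ofNat D 2, D_ofNat D 3, D_ofNat D 4, D_ofNat D 5, D_ofNat D 6, D_ofNat D 7, D_ofNat D 8]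
    field_simp [hT0, hu, hv, hHne]
    try ring

  have e22 : d (((-4)*T^2 + 16*T - 3)/T^4) = (8*T^2 - 48*T + 12)/T^5 := by
    show D (((-4)*T^2 + 16*T - 3)/T^4) = _
    rw [Derivation.leibniz_div]
    simp only [map_add, map_sub, map_neg, Derivation.leibniz, Derivation.leibniz_pow, Derivation.map_one_eq_zero, hDT, smul_eq_mul, nsmul_eq_mul, Nat.cast_ofNat, mul_zero, zero_mul, add_zero, zero_add, mul_one, one_mul, sub_zero, zero_sub, neg_zero, neg_neg, pow_one, D_ofNat D 2, D_ofNat D 3, D_ofNat D 4, D_ofNat D 5, D_ofNat D 6, D_ofNat D 7, D_ofNat D 8, D_ofNat D 16]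
    field_simp [hT0, hu, hv, hHne]
    try ring

  have e23 : d ((8*T^2 - 48*T + 12)/T^5) = ((-24)*T^2 + 192*T - 60)/T^6 := by
    show D ((8*T^2 - 48*T + 12)/T^5) = _
    rw [Derivation.leibniz_div]
    simp only [map_add, map_sub, map_neg, Derivation.leibniz, Derivation.leibniz_pow, Derivation.map_one_eq_zero, hDT, smul_eq_mul, nsmul_eq_mul, Nat.cast_ofNat, mul_zero, zero_mul, add_zero, zero_add, mul_one, one_mul, sub_zero, zero_sub, neg_zero, neg_neg, pow_one, D_ofNat D 2, D_ofNat D 3, D_ofNat D 4, D_ofNat D 5, D_ofNat D 6, D_ofNat D 7, D_ofNat D 8, D_ofNat D 12, D_ofNat D 48]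
    field_simp [hT0, hu, hv, hHne]
    try ring

  have e24 : d (((-24)*T^2 + 192*T - 60)/T^6) = (96*T^2 - 960*T + 360)/T^7 := by
    show D (((-24)*T^2 + 192*T - 60)/T^6) = _
    rw [Derivation.leibniz_div]
    simp only [map_add, map_sub, map_neg, Derivation.leibniz, Derivation.leibniz_pow, Derivation.map_one_eq_zero, hDT, smul_eq_mul, nsmul_eq_mul, Nat.cast_ofNat, mul_zero, zero_mul, add_zero, zero_add, mul_one, one_mul, sub_zero, zero_sub, neg_zero, neg_neg, pow_one, D_ofNat D 2, D_ofNat D 3, D_ofNat D 4, D_ofNat D 5, D_ofNat D 6, D_ofNat D 7, D_ofNat D 8, D_ofNat D 24, D_ofNat D 60, D_ofNat D 192]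
    field_simp [hT0, hu, hv, hHne]
    try ring

  have e31 : d ((12 * T ^ 2 - 1) / T ^ 3) = ((-12)*T^2 + 3)/T^4 := by
    show D ((12 * T ^ 2 - 1) / T ^ 3) = _
    rw [Derivation.leibniz_div]
    simp only [map_add, map_sub, map_neg, Derivation.leibniz, Derivation.leibniz_pow, Derivation.map_one_eq_zero, hDT, smul_eq_mul, nsmul_eq_mul, Nat.cast_ofNat, mul_zero, zero_mul, add_zero, zero_add, mul_one, one_mul, sub_zero, zero_sub, neg_zero, neg_neg, pow_one, D_ofNat D 2, D_ofNat D 3, D_ofNat D 4, D_ofNat D 5, D_ofNat D 6, D_ofNat D 7, D_ofNat D 8, D_ofNat D 12]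
    field_simp [hT0, hu, hv, hHne]
    try ring

  have e32 : d (((-12)*T^2 + 3)/T^4) = (24*T^2 - 12)/T^5 := by
    show D (((-12)*T^2 + 3)/T^4) = _
    rw [Derivation.leibniz_div]
    simp only [map_add, map_sub, map_neg, Derivation.leibniz, Derivation.leibniz_pow, Derivation.map_one_eq_zero, hDT, smul_eq_mul, nsmul_eq_mul, Nat.cast_ofNat, mul_zero, zero_mul, add_zero, zero_add, mul_one, one_mul, sub_zero, zero_sub, neg_zero, neg_neg, pow_one, D_ofNat D 2, D_ofNat D 3, D_ofNat D 4, D_ofNat D 5, D_ofNat D 6, D_ofNat D 7, D_ofNat D 8, D_ofNat D 12]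
    field_simp [hT0, hu, hv, hHne]
    try ring

  have e33 : d ((24*T^2 - 12)/T^5) = ((-72)*T^2 + 60)/T^6 := by
    show D ((24*T^2 - 12)/T^5) = _
    rw [Derivation.leibniz_div]
    simp only [map_add, map_sub, map_neg, Derivation.leibniz, Derivation.leibniz_pow, Derivation.map_one_eq_zero, hDT, smul_eq_mul, nsmul_eq_mul, Nat.cast_ofNat, mul_zero, zero_mul, add_zero, zero_add, mul_one, one_mul, sub_zero, zero_sub, neg_zero, neg_neg, pow_one, D_ofNat D 2, D_ofNat D 3, D_ofNat D 4, D_ofNat D 5, D_ofNat D 6, D_ofNat D 7, D_ofNat D 8, D_ofNat D 12, D_ofNat D 24]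
    field_simp [hT0, hu, hv, hHne]
    try ring

  have e34 : d (((-72)*T^2 + 60)/T^6) = (288*T^2 - 360)/T^7 := by
    show D (((-72)*T^2 + 60)/T^6) = _
    rw [Derivation.leibniz_div]
    simp only [map_add, map_sub, map_neg, Derivation.leibniz, Derivation.leibniz_pow, Derivation.map_one_eq_zero, hDT, smul_eq_mul, nsmul_eq_mul, Nat.cast_ofNat, mul_zero, zero_mul, add_zero, zero_add, mul_one, one_mul, sub_zero, zero_sub, neg_zero, neg_neg, pow_one, D_ofNat D 2, D_ofNat D 3, D_ofNat D 4, D_ofNat D 5, D_ofNat D 6, D_ofNat D 7, D_ofNat D 8, D_ofNat D 60, D_ofNat D 72]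
    field_simp [hT0, hu, hv, hHne]
    try ring

  have key := congrArg D hH2
  simp only [map_add, map_sub, map_neg, Derivation.leibniz, Derivation.leibniz_pow, Derivation.map_one_eq_zero, hDT, smul_eq_mul, nsmul_eq_mul, Nat.cast_ofNat, mul_zero, zero_mul, add_zero, zero_add, mul_one, one_mul, sub_zero, zero_sub, neg_zero, neg_neg, pow_one, D_ofNat D 2, D_ofNat D 3, D_ofNat D 4, D_ofNat D 5, D_ofNat D 6, D_ofNat D 7, D_ofNat D 8] at key
  have hDH : D ((h : LaurentSeries ℚ)) = ((-8)*(1+3*T)) * (h : LaurentSeries ℚ) / ((1-6*T)*(1+2*T)) := by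
    rw [eq_div_iff (mul_ne_zero hu hv)]
    apply mul_left_cancel₀ (show (2 : LaurentSeries ℚ) * (h : LaurentSeries ℚ) ≠ 0 from
      mul_ne_zero h2ne hHne)
    linear_combination ((1-6*T)*(1+2*T)) * key + 16*(1+3*T)*hH2

  have e41 : d ((h : LaurentSeries ℚ) / T ^ 3) = (((-3) + 4*T + 12*T^2) * (T^3 * (1-6*T)^3 * (1+2*T)^3)) * (h : LaurentSeries ℚ) / (T^7 * (1-6*T)^4 * (1+2*T)^4) := by
    show D ((h : LaurentSeries ℚ) / T ^ 3) = _
    rw [Derivation.leibniz_div]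
    simp only [map_add, map_sub, map_neg, Derivation.leibniz, Derivation.leibniz_pow, Derivation.map_one_eq_zero, hDT, smul_eq_mul, nsmul_eq_mul, Nat.cast_ofNat, mul_zero, zero_mul, add_zero, zero_add, mul_one, one_mul, sub_zero, zero_sub, neg_zero, neg_neg, pow_one, D_ofNat D 2, D_ofNat D 3, D_ofNat D 4, D_ofNat D 5, D_ofNat D 6, D_ofNat D 7, D_ofNat D 8, hDH]
    simp only [Nat.reduceSub]
    field_simp [hT0, hu, hv, hHne, show (1 - T*6) ≠ 0 by rw [mul_comm]; exact hu, show (1 + T*2) ≠ 0 by rw [mul_comm]; exact hv]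
    try ring

  have e42 : d ((((-3) + 4*T + 12*T^2) * (T^3 * (1-6*T)^3 * (1+2*T)^3)) * (h : LaurentSeries ℚ) / (T^7 * (1-6*T)^4 * (1+2*T)^4)) = ((12 - 48*T - 136*T^2 + 192*T^3 + 288*T^4) * (T^2 * (1-6*T)^2 * (1+2*T)^2)) * (h : LaurentSeries ℚ) / (T^7 * (1-6*T)^4 * (1+2*T)^4) := by
    show D ((((-3) + 4*T + 12*T^2) * (T^3 * (1-6*T)^3 * (1+2*T)^3)) * (h : LaurentSeries ℚ) / (T^7 * (1-6*T)^4 * (1+2*T)^4)) = _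
    rw [Derivation.leibniz_div]
    simp only [map_add, map_sub, map_neg, Derivation.leibniz, Derivation.leibniz_pow, Derivation.map_one_eq_zero, hDT, smul_eq_mul, nsmul_eq_mul, Nat.cast_ofNat, mul_zero, zero_mul, add_zero, zero_add, mul_one, one_mul, sub_zero, zero_sub, neg_zero, neg_neg, pow_one, D_ofNat D 2, D_ofNat D 3, D_ofNat D 4, D_ofNat D 5, D_ofNat D 6, D_ofNat D 7, D_ofNat D 8, D_ofNat D 12, hDH]
    simp only [Nat.reduceSub]
    field_simp [hT0, hu, hv, hHne, show (1 - T*6) ≠ 0 by rw [mul_comm]; exact hu, show (1 + T*2) ≠ 0 by rw [mul_comm]; exact hv]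
    try ring

  have e43 : d (((12 - 48*T - 136*T^2 + 192*T^3 + 288*T^4) * (T^2 * (1-6*T)^2 * (1+2*T)^2)) * (h : LaurentSeries ℚ) / (T^7 * (1-6*T)^4 * (1+2*T)^4)) = (((-60) + 432*T + 648*T^2 - 5472*T^3 - 6912*T^4 + 10368*T^5 + 10368*T^6) * (T^1 * (1-6*T)^1 * (1+2*T)^1)) * (h : LaurentSeries ℚ) / (T^7 * (1-6*T)^4 * (1+2*T)^4) := by
    show D (((12 - 48*T - 136*T^2 + 192*T^3 + 288*T^4) * (T^2 * (1-6*T)^2 * (1+2*T)^2)) * (h : LaurentSeries ℚ) / (T^7 * (1-6*T)^4 * (1+2*T)^4)) = _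
    rw [Derivation.leibniz_div]
    simp only [map_add, map_sub, map_neg, Derivation.leibniz, Derivation.leibniz_pow, Derivation.map_one_eq_zero, hDT, smul_eq_mul, nsmul_eq_mul, Nat.cast_ofNat, mul_zero, zero_mul, add_zero, zero_add, mul_one, one_mul, sub_zero, zero_sub, neg_zero, neg_neg, pow_one, D_ofNat D 2, D_ofNat D 3, D_ofNat D 4, D_ofNat D 5, D_ofNat D 6, D_ofNat D 7, D_ofNat D 8, D_ofNat D 12, D_ofNat D 48, D_ofNat D 136, D_ofNat D 192, D_ofNat D 288, hDH]
    simp only [Nat.reduceSub]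
    field_simp [hT0, hu, hv, hHne, show (1 - T*6) ≠ 0 by rw [mul_comm]; exact hu, show (1 + T*2) ≠ 0 by rw [mul_comm]; exact hv]
    try ring

  have e44 : d ((((-60) + 432*T + 648*T^2 - 5472*T^3 - 6912*T^4 + 10368*T^5 + 10368*T^6) * (T^1 * (1-6*T)^1 * (1+2*T)^1)) * (h : LaurentSeries ℚ) / (T^7 * (1-6*T)^4 * (1+2*T)^4)) = (360 - 3840*T + 576*T^2 + 76032*T^3 - 11520*T^4 - 552960*T^5 - 414720*T^6 + 663552*T^7 + 497664*T^8) * (h : LaurentSeries ℚ) / (T^7 * (1-6*T)^4 * (1+2*T)^4) := by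
    show D ((((-60) + 432*T + 648*T^2 - 5472*T^3 - 6912*T^4 + 10368*T^5 + 10368*T^6) * (T^1 * (1-6*T)^1 * (1+2*T)^1)) * (h : LaurentSeries ℚ) / (T^7 * (1-6*T)^4 * (1+2*T)^4)) = _
    rw [Derivation.leibniz_div]
    simp only [map_add, map_sub, map_neg, Derivation.leibniz, Derivation.leibniz_pow, Derivation.map_one_eq_zero, hDT, smul_eq_mul, nsmul_eq_mul, Nat.cast_ofNat, mul_zero, zero_mul, add_zero, zero_add, mul_one, one_mul, sub_zero, zero_sub, neg_zero, neg_neg, pow_one, D_ofNat D 2, D_ofNat D 3, D_ofNat D 4, D_ofNat D 5, D_ofNat D 6, D_ofNat D 7, D_ofNat D 8, D_ofNat D 60, D_ofNat D 432, D_ofNat D 648, D_ofNat D 5472, D_ofNat D 6912, D_ofNat D 10368, hDH]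
    simp only [Nat.reduceSub]
    field_simp [hT0, hu, hv, hHne, show (1 - T*6) ≠ 0 by rw [mul_comm]; exact hu, show (1 + T*2) ≠ 0 by rw [mul_comm]; exact hv]
    try ring

  have hsplit : (h : LaurentSeries ℚ) / T ^ 3
      = ((T^4 * (1-6*T)^4 * (1+2*T)^4) * (h : LaurentSeries ℚ)) / (T^7 * (1-6*T)^4 * (1+2*T)^4) := by
    rw [div_eq_div_iff (pow_ne_zero 3 hT0) hWne]
    ring

  refine ⟨?_, ?_, ?_, ?_⟩
  · show T ^ 3 * (2 * T + 1) * (6 * T - 1) * d^[4] (1/T)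
        + 4 * T ^ 2 * (48 * T ^ 2 + 13 * T - 3) * d^[3] (1/T)
        + 36 * T * (3 * T + 1) * (8 * T - 1) * d^[2] (1/T)
        + (1152 * T ^ 2 + 168 * T - 24) * d (1/T)
        + (288 * T + 24) * (1/T) = 0
    simp only [Function.iterate_succ, Function.iterate_zero, Function.comp_apply, id_eq]
    rw [e11, e12, e13, e14]
    field_simp [hT0, hu, hv, hHne]
    try ring
  · show T ^ 3 * (2 * T + 1) * (6 * T - 1) * d^[4] ((4 * T ^ 2 - 8 * T + 1) / T ^ 3)
        + 4 * T ^ 2 * (48 * T ^ 2 + 13 * T - 3) * d^[3] ((4 * T ^ 2 - 8 * T + 1) / T ^ 3)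
        + 36 * T * (3 * T + 1) * (8 * T - 1) * d^[2] ((4 * T ^ 2 - 8 * T + 1) / T ^ 3)
        + (1152 * T ^ 2 + 168 * T - 24) * d ((4 * T ^ 2 - 8 * T + 1) / T ^ 3)
        + (288 * T + 24) * ((4 * T ^ 2 - 8 * T + 1) / T ^ 3) = 0
    simp only [Function.iterate_succ, Function.iterate_zero, Function.comp_apply, id_eq]
    rw [e21, e22, e23, e24]
    field_simp [hT0, hu, hv, hHne]
    try ring
  · show T ^ 3 * (2 * T + 1) * (6 * T - 1) * d^[4] ((12 * T ^ 2 - 1) / T ^ 3)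
        + 4 * T ^ 2 * (48 * T ^ 2 + 13 * T - 3) * d^[3] ((12 * T ^ 2 - 1) / T ^ 3)
        + 36 * T * (3 * T + 1) * (8 * T - 1) * d^[2] ((12 * T ^ 2 - 1) / T ^ 3)
        + (1152 * T ^ 2 + 168 * T - 24) * d ((12 * T ^ 2 - 1) / T ^ 3)
        + (288 * T + 24) * ((12 * T ^ 2 - 1) / T ^ 3) = 0
    simp only [Function.iterate_succ, Function.iterate_zero, Function.comp_apply, id_eq]
    rw [e31, e32, e33, e34]
    field_simp [hT0, hu, hv, hHne]
    try ring
  · show T ^ 3 * (2 * T + 1) * (6 * T - 1) * d^[4] ((h : LaurentSeries ℚ) / T ^ 3)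
        + 4 * T ^ 2 * (48 * T ^ 2 + 13 * T - 3) * d^[3] ((h : LaurentSeries ℚ) / T ^ 3)
        + 36 * T * (3 * T + 1) * (8 * T - 1) * d^[2] ((h : LaurentSeries ℚ) / T ^ 3)
        + (1152 * T ^ 2 + 168 * T - 24) * d ((h : LaurentSeries ℚ) / T ^ 3)
        + (288 * T + 24) * ((h : LaurentSeries ℚ) / T ^ 3) = 0
    simp only [Function.iterate_succ, Function.iterate_zero, Function.comp_apply, id_eq]
    rw [e41, e42, e43, e44, hsplit]
    simp only [← mul_div_assoc, ← add_div]
    rw [div_eq_zero_iff]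
    left
    ring
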